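/- Let v₁, v₂ be polynomials of degree at most p in one variable, and suppose v₁(x) = v₂(x) + ∑_{k=1}^p (1/k!)·J_k·(x - x_F)^k for some point x_F and real jumps J_k = v₁^{(k)}(x_F) - v₂^{(k)}(x_F). Then for any interval T₁ = [x_F, x_F + h], ‖v₁‖²_{L²(T₁)} ≤ (1 + ∑_{k=1}^p 1/w_k)·(‖v₂‖²_{L²(T₁)} + ∑_{k=1}^p w_k·(h^{2k+1}/((2k+1)(k!)²))·J_k²) for any positive weights w_1,…,w_p. -/

import Mathlib

open Polynomial Finset intervalIntegral

lemma weighted_cs_aux (s : Finset ℕ) (w a : ℕ → ℝ) (hw : ∀ i ∈ s, 0 < w i) :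
    (∑ i ∈ s, a i) ^ 2 ≤ (∑ i ∈ s, 1 / w i) * (∑ i ∈ s, w i * a i ^ 2) := by
  refine sum_sq_le_sum_mul_sum_of_sq_eq_mul s
    (fun i hi => by have := hw i hi; positivity)
    (fun i hi => by have := hw i hi; positivity) (fun i hi => ?_)
  rw [one_div, inv_mul_eq_div, mul_comm (w i), mul_div_assoc, div_self (hw i hi).ne', mul_one]

/-- One-dimensional fundamental inequality (Lemma 5.1): if
`v₁(x) = v₂(x) + ∑_{k=1}^p (J_k/k!)(x-x_F)^k` with jumps
`J_k = v₁⁽ᵏ⁾(x_F) - v₂⁽ᵏ⁾(x_F)`, then for `T₁ = [x_F, x_F+h]` and any positive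
weights `w_k`,
`‖v₁‖²_{L²(T₁)} ≤ (1 + ∑ 1/w_k)(‖v₂‖²_{L²(T₁)} + ∑ w_k h^(2k+1)/((2k+1)(k!)²) J_k²)`. -/
theorem fundamental_inequality_1d (p : ℕ) (v₁ v₂ : Polynomial ℝ)
    (hv₁ : v₁.natDegree ≤ p) (hv₂ : v₂.natDegree ≤ p)
    (x_F h : ℝ) (hh : 0 < h) (J : ℕ → ℝ)
    (hJ : ∀ k, J k = (derivative^[k] v₁).eval x_F - (derivative^[k] v₂).eval x_F)
    (htaylor : ∀ x : ℝ, v₁.eval x =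
      v₂.eval x + ∑ k ∈ Icc 1 p, (1 / (k.factorial : ℝ)) * J k * (x - x_F) ^ k)
    (w : ℕ → ℝ) (hw : ∀ k ∈ Icc 1 p, 0 < w k) :
    (∫ x in x_F..(x_F + h), (v₁.eval x) ^ 2) ≤
      (1 + ∑ k ∈ Icc 1 p, 1 / w k) *
        ((∫ x in x_F..(x_F + h), (v₂.eval x) ^ 2) +
          ∑ k ∈ Icc 1 p,
            w k * (h ^ (2 * k + 1) / ((2 * k + 1) * (k.factorial : ℝ) ^ 2)) * (J k) ^ 2) := by
  set C : ℝ := 1 + ∑ k ∈ Icc 1 p, 1 / w k with hC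
  -- Pointwise weighted Cauchy–Schwarz
  have hpt : ∀ x : ℝ, (v₁.eval x) ^ 2 ≤
      C * ((v₂.eval x) ^ 2 + ∑ k ∈ Icc 1 p,
        w k * ((1 / (k.factorial : ℝ)) * J k * (x - x_F) ^ k) ^ 2) := by
    intro x
    have h0 : (0 : ℕ) ∉ Icc 1 p := by simp
    set a : ℕ → ℝ := fun k => if k = 0 then v₂.eval x
      else (1 / (k.factorial : ℝ)) * J k * (x - x_F) ^ k with ha
    set W : ℕ → ℝ := fun k => if k = 0 then 1 else w k with hW
    have key := weighted_cs_aux (insert 0 (Icc 1 p)) W a (by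
      intro i hi
      rcases Finset.mem_insert.1 hi with rfl | hi
      · simp [hW]
      · have := hw i hi
        have : i ≠ 0 := by
          intro hiz; exact h0 (hiz ▸ hi)
        simpa [hW, this] using hw i hi)
    rw [Finset.sum_insert h0, Finset.sum_insert h0, Finset.sum_insert h0] at key
    have e1 : ∑ i ∈ Icc 1 p, a i =
        ∑ k ∈ Icc 1 p, (1 / (k.factorial : ℝ)) * J k * (x - x_F) ^ k := by
      refine Finset.sum_congr rfl fun i hi => ?_
      have hiz : i ≠ 0 := fun hz => h0 (hz ▸ hi)
      simp [ha, hiz]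
    have e2 : ∑ i ∈ Icc 1 p, (1 : ℝ) / W i = ∑ k ∈ Icc 1 p, 1 / w k := by
      refine Finset.sum_congr rfl fun i hi => ?_
      have hiz : i ≠ 0 := fun hz => h0 (hz ▸ hi)
      simp [hW, hiz]
    have e3 : ∑ i ∈ Icc 1 p, W i * a i ^ 2 =
        ∑ k ∈ Icc 1 p, w k * ((1 / (k.factorial : ℝ)) * J k * (x - x_F) ^ k) ^ 2 := by
      refine Finset.sum_congr rfl fun i hi => ?_
      have hiz : i ≠ 0 := fun hz => h0 (hz ▸ hi)
      simp [ha, hW, hiz]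
    simp only [ha, hW, if_pos rfl] at key
    rw [e1, e2, e3] at key
    calc (v₁.eval x) ^ 2
        = (v₂.eval x + ∑ k ∈ Icc 1 p, (1 / (k.factorial : ℝ)) * J k * (x - x_F) ^ k) ^ 2 := by
          rw [htaylor x]
      _ ≤ _ := by
          have : (v₂.eval x + ∑ k ∈ Icc 1 p, (1 / (k.factorial : ℝ)) * J k * (x - x_F) ^ k) ^ 2 ≤
              (1 / 1 + ∑ k ∈ Icc 1 p, 1 / w k) *
              (1 * (v₂.eval x) ^ 2 + ∑ k ∈ Icc 1 p,
                w k * ((1 / (k.factorial : ℝ)) * J k * (x - x_F) ^ k) ^ 2) := key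
          simpa [hC] using this
  -- Integrability
  have hc1 : Continuous fun x : ℝ => (v₁.eval x) ^ 2 := v₁.continuous.pow 2
  have hc2 : Continuous fun x : ℝ => (v₂.eval x) ^ 2 := v₂.continuous.pow 2
  have hck : ∀ k : ℕ, Continuous fun x : ℝ =>
      w k * ((1 / (k.factorial : ℝ)) * J k * (x - x_F) ^ k) ^ 2 := fun k =>
    continuous_const.mul ((continuous_const.mul ((continuous_id.sub continuous_const).pow k)).pow 2)
  have hcsum : Continuous fun x : ℝ => ∑ k ∈ Icc 1 p,
      w k * ((1 / (k.factorial : ℝ)) * J k * (x - x_F) ^ k) ^ 2 :=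
    continuous_finset_sum _ fun k _ => hck k
  have hxle : x_F ≤ x_F + h := by linarith
  have hint1 : IntervalIntegrable (fun x => (v₁.eval x) ^ 2) MeasureTheory.volume x_F (x_F + h) :=
    hc1.intervalIntegrable _ _
  have hint2 : IntervalIntegrable (fun x => C * ((v₂.eval x) ^ 2 + ∑ k ∈ Icc 1 p,
      w k * ((1 / (k.factorial : ℝ)) * J k * (x - x_F) ^ k) ^ 2))
      MeasureTheory.volume x_F (x_F + h) :=
    (continuous_const.mul (hc2.add hcsum)).intervalIntegrable _ _
  have hmain : (∫ x in x_F..(x_F + h), (v₁.eval x) ^ 2) ≤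
      ∫ x in x_F..(x_F + h), C * ((v₂.eval x) ^ 2 + ∑ k ∈ Icc 1 p,
        w k * ((1 / (k.factorial : ℝ)) * J k * (x - x_F) ^ k) ^ 2) :=
    intervalIntegral.integral_mono_on hxle hint1 hint2 fun x _ => hpt x
  refine hmain.trans_eq ?_
  rw [intervalIntegral.integral_const_mul]
  congr 1
  rw [intervalIntegral.integral_add (hc2.intervalIntegrable _ _) (hcsum.intervalIntegrable _ _)]
  congr 1
  rw [intervalIntegral.integral_finset_sum fun k _ => ((hck k).intervalIntegrable _ _)]
  refine Finset.sum_congr rfl fun k hk => ?_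
  have hmono : ∫ x in x_F..(x_F + h),
      w k * ((1 / (k.factorial : ℝ)) * J k * (x - x_F) ^ k) ^ 2 =
      (w k * ((1 / (k.factorial : ℝ)) * J k) ^ 2) *
        ∫ x in x_F..(x_F + h), (x - x_F) ^ (2 * k) := by
    rw [← intervalIntegral.integral_const_mul]
    refine intervalIntegral.integral_congr fun x _ => ?_
    rw [pow_mul']
    ring
  rw [hmono]
  have hx : (∫ x in x_F..(x_F + h), (x - x_F) ^ (2 * k)) = h ^ (2 * k + 1) / (2 * k + 1) := by
    have := intervalIntegral.integral_comp_sub_right (fun x : ℝ => x ^ (2 * k)) x_F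
      (a := x_F) (b := x_F + h)
    rw [this]
    simp [integral_pow]
  rw [hx]
  have hfac : ((k.factorial : ℝ)) ≠ 0 := by positivity
  field_simp
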